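/- Fix integers n, j, m ≥ 1 with j ≤ n, a composition (n_1,…,n_j) of n into j positive parts, a real α < 1, and real weights V(n,k) with V(n,j) ≠ 0. Let 1 ≤ l ≤ m. Then the expected number of new blocks of size l under the conditional Gibbs sampling formula satisfies: ∑ w_l·Q(w) = binom(m,l)·((1−α)_{l−1}/V(n,j))·∑_{k=1}^{m−l+1} V(n+m,j+k)·S(m−l, k−1; α, −(n−jα)), where the sum ranges over all tuples (w_1,…,w_m) of nonnegative integers with ∑_{i=1}^{m} i·w_i ≤ m. -/

import Mathlib

/-- Rising factorial `(x)_n = x(x+1)⋯(x+n−1)`. -/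
noncomputable def risingFac (x : ℝ) (n : ℕ) : ℝ := ∏ i ∈ Finset.range n, (x + i)

/-- Rising factorial with increment `α`: `(x)_{n↑α} = ∏_{i<n} (x + iα)`. -/
noncomputable def risingFacInc (x α : ℝ) (n : ℕ) : ℝ := ∏ i ∈ Finset.range n, (x + i * α)

/-- Falling factorial `(x)_{[n]} = x(x−1)⋯(x−n+1)`. -/
noncomputable def fallingFac (x : ℝ) (n : ℕ) : ℝ := ∏ i ∈ Finset.range n, (x - i)

/-- Compositions of `n` into `k` positive parts, as functions `Fin k → ℕ`. -/
def compositions (n k : ℕ) : Finset (Fin k → ℕ) :=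
  (Fintype.piFinset fun _ => Finset.range (n + 1)).filter
    (fun f => (∀ i, 0 < f i) ∧ ∑ i, f i = n)

/-- Tuples of `k` nonnegative integers summing to `n`. -/
def weakCompositions (n k : ℕ) : Finset (Fin k → ℕ) :=
  (Fintype.piFinset fun _ => Finset.range (n + 1)).filter (fun f => ∑ i, f i = n)

/-- Generalized (central) Stirling number
`S(n,k;α) = (n!/k!) ∑_{(n_1,…,n_k)} ∏_j (1−α)_{n_j−1}/n_j!`,
the sum over compositions of `n` into `k` positive parts. -/
noncomputable def genStirling (α : ℝ) (n k : ℕ) : ℝ :=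
  (Nat.factorial n : ℝ) / (Nat.factorial k : ℝ) *
    ∑ f ∈ compositions n k, ∏ j, risingFac (1 - α) (f j - 1) / (Nat.factorial (f j) : ℝ)

/-- Non-central generalized Stirling number
`S(n,k;α,γ) = ∑_{s=k}^n C(n,s) S(s,k;α) (−γ)_{n−s}`. -/
noncomputable def genStirlingNC (α γ : ℝ) (n k : ℕ) : ℝ :=
  ∑ s ∈ Finset.Icc k n, (n.choose s : ℝ) * genStirling α s k * risingFac (-γ) (n - s)

/-- Vectors `(w_1,…,w_m)` of nonnegative integers with `∑ i·w_i ≤ m`,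
encoded as `w : Fin m → ℕ` where index `i` represents size `i+1`. -/
def condCountVectors (m : ℕ) : Finset (Fin m → ℕ) :=
  (Fintype.piFinset fun _ => Finset.range (m + 1)).filter
    (fun w => ∑ i, (i.1 + 1) * w i ≤ m)

/-- The conditional Gibbs sampling formula
`Q(w) = m!·(V(n+m,j+k)/V(n,j))·((n−jα)_{m−s}/(m−s)!)·
∏_i [(1−α)_{i−1}]^{w_i}/((i!)^{w_i} w_i!)`, where `s = ∑ i·w_i` and `k = ∑ w_i`. -/
noncomputable def condSampling (α : ℝ) (V : ℕ → ℕ → ℝ) (n j m : ℕ)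
    (w : Fin m → ℕ) : ℝ :=
  (Nat.factorial m : ℝ) * (V (n + m) (j + ∑ i, w i) / V n j) *
    (risingFac ((n : ℝ) - j * α) (m - ∑ i, (i.1 + 1) * w i) /
      (Nat.factorial (m - ∑ i, (i.1 + 1) * w i) : ℝ)) *
    ∏ i, (risingFac (1 - α) i.1) ^ (w i) /
      ((Nat.factorial (i.1 + 1) : ℝ) ^ (w i) * (Nat.factorial (w i) : ℝ))


open Finset

-- generic update decompositions
lemma prod_update_eq {m : ℕ} (F : Fin m → ℕ → ℝ) (w : Fin m → ℕ) (a : Fin m) (v : ℕ) :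
    ∏ i, F i (Function.update w a v i) = F a v * ∏ i ∈ univ.erase a, F i (w i) := by
  rw [← Finset.mul_prod_erase univ (fun i => F i (Function.update w a v i)) (mem_univ a)]
  rw [Function.update_self]
  congr 1
  refine Finset.prod_congr rfl fun i hi => ?_
  rw [Function.update_of_ne (Finset.ne_of_mem_erase hi)]

lemma prod_eq_update' {m : ℕ} (F : Fin m → ℕ → ℝ) (w : Fin m → ℕ) (a : Fin m) :
    ∏ i, F i (w i) = F a (w a) * ∏ i ∈ univ.erase a, F i (w i) :=
  (Finset.mul_prod_erase univ (fun i => F i (w i)) (mem_univ a)).symm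

lemma sum_update_eq {m : ℕ} (F : Fin m → ℕ → ℕ) (w : Fin m → ℕ) (a : Fin m) (v : ℕ) :
    ∑ i, F i (Function.update w a v i) = F a v + ∑ i ∈ univ.erase a, F i (w i) := by
  rw [← Finset.add_sum_erase univ (fun i => F i (Function.update w a v i)) (mem_univ a)]
  rw [Function.update_self]
  congr 1
  refine Finset.sum_congr rfl fun i hi => ?_
  rw [Function.update_of_ne (Finset.ne_of_mem_erase hi)]

lemma sum_eq_update' {m : ℕ} (F : Fin m → ℕ → ℕ) (w : Fin m → ℕ) (a : Fin m) :
    ∑ i, F i (w i) = F a (w a) + ∑ i ∈ univ.erase a, F i (w i) :=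
  (Finset.add_sum_erase univ (fun i => F i (w i)) (mem_univ a)).symm

lemma mem_compositions {n k : ℕ} {f : Fin k → ℕ} :
    f ∈ compositions n k ↔ (∀ i, 0 < f i) ∧ ∑ i, f i = n := by
  constructor
  · intro h; exact (Finset.mem_filter.mp h).2
  · intro h
    refine Finset.mem_filter.mpr ⟨Fintype.mem_piFinset.mpr fun i => ?_, h⟩
    rw [Finset.mem_range, Nat.lt_succ_iff, ← h.2]
    exact Finset.single_le_sum (fun i _ => Nat.zero_le _) (mem_univ i)

def Wset (m s k : ℕ) : Finset (Fin m → ℕ) :=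
  (Fintype.piFinset fun _ => Finset.range (s + 1)).filter
    (fun w => ∑ i, (i.1 + 1) * w i = s ∧ ∑ i, w i = k)

lemma mem_Wset {m s k : ℕ} {w : Fin m → ℕ} :
    w ∈ Wset m s k ↔ ∑ i, (i.1 + 1) * w i = s ∧ ∑ i, w i = k := by
  constructor
  · intro h; exact (Finset.mem_filter.mp h).2
  · intro h
    refine Finset.mem_filter.mpr ⟨Fintype.mem_piFinset.mpr fun i => ?_, h⟩
    rw [Finset.mem_range, Nat.lt_succ_iff, ← h.1]
    calc w i ≤ (i.1 + 1) * w i := Nat.le_mul_of_pos_left _ (Nat.succ_pos _)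
    _ ≤ _ := Finset.single_le_sum (f := fun j : Fin m => (j.1 + 1) * w j)
      (fun i _ => Nat.zero_le _) (mem_univ i)

noncomputable def Pterm (α : ℝ) {m : ℕ} (w : Fin m → ℕ) : ℝ :=
  ∏ i, (risingFac (1 - α) i.1) ^ (w i) /
      ((Nat.factorial (i.1 + 1) : ℝ) ^ (w i) * (Nat.factorial (w i) : ℝ))

noncomputable def UU (α : ℝ) (m s k : ℕ) : ℝ := ∑ w ∈ Wset m s k, Pterm α w

noncomputable def TT (α : ℝ) (s k : ℕ) : ℝ :=
  ∑ f ∈ compositions s k, ∏ j, risingFac (1 - α) (f j - 1) / (Nat.factorial (f j) : ℝ)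

lemma genStirling_eq (α : ℝ) (s k : ℕ) :
    genStirling α s k = (Nat.factorial s : ℝ) / (Nat.factorial k : ℝ) * TT α s k := rfl

lemma genStirling_eq_zero (α : ℝ) {s k : ℕ} (h : s < k) : genStirling α s k = 0 := by
  have : compositions s k = ∅ := by
    refine Finset.eq_empty_of_forall_notMem fun f hf => ?_
    obtain ⟨h1, h2⟩ := mem_compositions.mp hf
    have : k ≤ ∑ i, f i := by
      calc k = ∑ _i : Fin k, 1 := by simp
      _ ≤ _ := Finset.sum_le_sum fun i _ => h1 i
    omega
  rw [genStirling_eq, TT, this]; simp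

lemma sum_mul_Pterm (α : ℝ) {m : ℕ} (s k : ℕ) (a : Fin m) :
    ∑ w ∈ Wset m s k, (w a : ℝ) * Pterm α w =
      if 1 ≤ k ∧ a.1 + 1 ≤ s then
        (risingFac (1 - α) a.1 / (Nat.factorial (a.1 + 1) : ℝ)) *
          UU α m (s - (a.1 + 1)) (k - 1)
      else 0 := by
  by_cases h : 1 ≤ k ∧ a.1 + 1 ≤ s
  · rw [if_pos h]
    obtain ⟨hk, ha⟩ := h
    rw [UU, Finset.mul_sum]
    rw [← Finset.sum_filter_of_ne (p := fun w => 0 < w a) (fun w _ hw => by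
      by_contra hc
      push_neg at hc
      have h0 : w a = 0 := by omega
      rw [h0] at hw
      simp at hw)]
    set F : Fin m → ℕ → ℝ := fun i v => (risingFac (1 - α) i.1) ^ v /
      ((Nat.factorial (i.1 + 1) : ℝ) ^ v * (Nat.factorial v : ℝ)) with hF
    refine Finset.sum_nbij' (fun w => Function.update w a (w a - 1))
      (fun w => Function.update w a (w a + 1)) ?_ ?_ ?_ ?_ ?_
    · intro w hw
      obtain ⟨hw1, hw2⟩ := Finset.mem_filter.mp hw
      obtain ⟨h1, h2⟩ := mem_Wset.mp hw1
      rw [sum_eq_update' (fun i v => (i.1 + 1) * v) w a] at h1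
      rw [sum_eq_update' (fun _ v => v) w a] at h2
      obtain ⟨v, hv⟩ : ∃ v, w a = v + 1 := ⟨w a - 1, by omega⟩
      refine mem_Wset.mpr ⟨?_, ?_⟩
      · rw [sum_update_eq (fun i v => (i.1 + 1) * v) w a]
        rw [hv] at h1 ⊢
        rw [Nat.mul_succ] at h1
        simp only [Nat.add_sub_cancel]
        generalize (a.1 + 1) * v = P at h1 ⊢
        omega
      · rw [sum_update_eq (fun _ v => v) w a]
        omega
    · intro w hw
      obtain ⟨h1, h2⟩ := mem_Wset.mp hw
      refine Finset.mem_filter.mpr ⟨mem_Wset.mpr ⟨?_, ?_⟩, ?_⟩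
      · rw [sum_update_eq (fun i v => (i.1 + 1) * v) w a]
        rw [sum_eq_update' (fun i v => (i.1 + 1) * v) w a] at h1
        rw [Nat.mul_succ]
        generalize (a.1 + 1) * w a = P at h1 ⊢
        omega
      · rw [sum_update_eq (fun _ v => v) w a]
        rw [sum_eq_update' (fun _ v => v) w a] at h2
        omega
      · simp only [Function.update_self]
        omega
    · intro w hw
      have hpos : 0 < w a := (Finset.mem_filter.mp hw).2
      simp only [Function.update_self, Function.update_idem]
      rw [Nat.sub_add_cancel hpos, Function.update_eq_self]
    · intro w _
      simp only [Function.update_self, Function.update_idem, Nat.add_sub_cancel,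
        Function.update_eq_self]
    · intro w hw
      have hpos : 0 < w a := (Finset.mem_filter.mp hw).2
      have hP1 : Pterm α w = F a (w a) * ∏ i ∈ univ.erase a, F i (w i) :=
        prod_eq_update' F w a
      have hP2 : Pterm α (Function.update w a (w a - 1)) =
          F a (w a - 1) * ∏ i ∈ univ.erase a, F i (w i) :=
        prod_update_eq F w a (w a - 1)
      rw [hP1, hP2, ← mul_assoc, ← mul_assoc]
      congr 1
      obtain ⟨v, hv⟩ : ∃ v, w a = v + 1 := ⟨w a - 1, by omega⟩
      rw [hv]
      simp only [Nat.add_sub_cancel, hF]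
      have hq : (Nat.factorial (a.1 + 1) : ℝ) ≠ 0 := Nat.cast_ne_zero.mpr (Nat.factorial_ne_zero _)
      have hv1 : (Nat.factorial v : ℝ) ≠ 0 := Nat.cast_ne_zero.mpr (Nat.factorial_ne_zero _)
      push_cast [Nat.factorial_succ, pow_succ]
      field_simp
  · rw [if_neg h]
    refine Finset.sum_eq_zero fun w hw => ?_
    obtain ⟨h1, h2⟩ := mem_Wset.mp hw
    have hwa : w a = 0 := by
      push_neg at h
      rcases Nat.lt_or_ge k 1 with hk | hk
      · have : w a ≤ ∑ i, w i :=
          Finset.single_le_sum (f := fun i : Fin m => w i) (fun i _ => Nat.zero_le _) (mem_univ a)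
        omega
      · have hs := h hk
        have h3 : (a.1 + 1) * w a ≤ s := by
          rw [← h1]
          exact Finset.single_le_sum (f := fun i : Fin m => (i.1 + 1) * w i)
            (fun i _ => Nat.zero_le _) (mem_univ a)
        by_contra hc
        have : a.1 + 1 ≤ (a.1 + 1) * w a := Nat.le_mul_of_pos_right _ (by omega)
        omega
    rw [hwa]
    simp

lemma UU_rec (α : ℝ) {m : ℕ} (s k : ℕ) (hk : 1 ≤ k) (hsm : s ≤ m) :
    (k : ℝ) * UU α m s k = ∑ a ∈ Finset.Icc 1 s,
      (risingFac (1 - α) (a - 1) / (Nat.factorial a : ℝ)) * UU α m (s - a) (k - 1) := by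
  rw [UU, Finset.mul_sum]
  have step1 : ∀ w ∈ Wset m s k, (k : ℝ) * Pterm α w = ∑ i : Fin m, (w i : ℝ) * Pterm α w := by
    intro w hw
    rw [← (mem_Wset.mp hw).2]
    push_cast
    rw [Finset.sum_mul]
  rw [Finset.sum_congr rfl step1, Finset.sum_comm]
  have step2 : ∀ i : Fin m, ∑ w ∈ Wset m s k, (w i : ℝ) * Pterm α w =
      if i.1 + 1 ≤ s then
        (risingFac (1 - α) i.1 / (Nat.factorial (i.1 + 1) : ℝ)) * UU α m (s - (i.1 + 1)) (k - 1)
      else 0 := by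
    intro i
    rw [sum_mul_Pterm α s k i]
    by_cases hi : i.1 + 1 ≤ s
    · rw [if_pos ⟨hk, hi⟩, if_pos hi]
    · rw [if_neg (fun hc => hi hc.2), if_neg hi]
  rw [Finset.sum_congr rfl fun i _ => step2 i, ← Finset.sum_filter]
  refine Finset.sum_bij (fun i _ => i.1 + 1) ?_ ?_ ?_ ?_
  · intro i hi
    have h2 : i.1 + 1 ≤ s := (Finset.mem_filter.mp hi).2
    have h3 : 1 ≤ i.1 + 1 := by omega
    exact Finset.mem_Icc.mpr ⟨h3, h2⟩
  · intro i hi i' hi' hii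
    have h : i.1 + 1 = i'.1 + 1 := hii
    exact Fin.ext (by omega)
  · intro b hb
    obtain ⟨hb1, hb2⟩ := Finset.mem_Icc.mp hb
    have hbm : b - 1 < m := by omega
    refine ⟨⟨b - 1, hbm⟩, Finset.mem_filter.mpr ⟨mem_univ _, ?_⟩, ?_⟩
    · show b - 1 + 1 ≤ s
      omega
    · show b - 1 + 1 = b
      omega
  · intro i hi
    have h1 : i.1 + 1 - 1 = i.1 := by omega
    rw [h1]

lemma TT_rec (α : ℝ) (s k : ℕ) :
    TT α s (k + 1) = ∑ a ∈ Finset.Icc 1 s,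
      (risingFac (1 - α) (a - 1) / (Nat.factorial a : ℝ)) * TT α (s - a) k := by
  have hrhs : ∑ a ∈ Finset.Icc 1 s,
      (risingFac (1 - α) (a - 1) / (Nat.factorial a : ℝ)) * TT α (s - a) k =
      ∑ p ∈ (Finset.Icc 1 s).sigma (fun a => compositions (s - a) k),
        (risingFac (1 - α) (p.1 - 1) / (Nat.factorial p.1 : ℝ)) *
          ∏ j, risingFac (1 - α) (p.2 j - 1) / (Nat.factorial (p.2 j) : ℝ) := by
    rw [Finset.sum_sigma]
    refine Finset.sum_congr rfl fun a _ => ?_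
    rw [TT, Finset.mul_sum]
  rw [hrhs, TT]
  refine Finset.sum_nbij' (fun f => ⟨f (Fin.last k), Fin.init f⟩)
    (fun p => Fin.snoc p.2 p.1) ?_ ?_ ?_ ?_ ?_
  · intro f hf
    obtain ⟨h1, h2⟩ := mem_compositions.mp hf
    have hle : f (Fin.last k) ≤ s := by
      rw [← h2]
      exact Finset.single_le_sum (f := fun i => f i) (fun i _ => Nat.zero_le _) (mem_univ _)
    refine Finset.mem_sigma.mpr ⟨Finset.mem_Icc.mpr ⟨h1 _, hle⟩, mem_compositions.mpr ⟨?_, ?_⟩⟩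
    · intro i; exact h1 _
    · show ∑ i : Fin k, Fin.init f i = s - f (Fin.last k)
      rw [Fin.sum_univ_castSucc] at h2
      have : ∑ i : Fin k, Fin.init f i = ∑ i : Fin k, f i.castSucc := rfl
      omega
  · intro p hp
    obtain ⟨hp1, hp2⟩ := Finset.mem_sigma.mp hp
    obtain ⟨ha1, ha2⟩ := Finset.mem_Icc.mp hp1
    obtain ⟨h1, h2⟩ := mem_compositions.mp hp2
    refine mem_compositions.mpr ⟨?_, ?_⟩
    · intro i
      rcases Fin.eq_castSucc_or_eq_last i with ⟨j, rfl⟩ | rfl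
      · rw [Fin.snoc_castSucc]; exact h1 j
      · rw [Fin.snoc_last]; omega
    · rw [Fin.sum_univ_castSucc, Fin.snoc_last]
      have h3 : ∑ i : Fin k, (Fin.snoc p.2 p.1 : Fin (k + 1) → ℕ) i.castSucc
          = ∑ i : Fin k, p.2 i :=
        Finset.sum_congr rfl fun i _ => by simp
      omega
  · intro f _
    exact Fin.snoc_init_self f
  · intro p _
    simp only [Fin.snoc_last, Fin.init_snoc]
  · intro f _
    rw [Fin.prod_univ_castSucc, mul_comm]
    rfl

lemma Wset_zero (m : ℕ) : Wset m 0 0 = {fun _ => 0} := by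
  ext w
  simp only [mem_Wset, Finset.mem_singleton, funext_iff]
  constructor
  · rintro ⟨h1, h2⟩ i
    exact Finset.sum_eq_zero_iff.mp h2 i (mem_univ i)
  · intro h
    constructor <;> (apply Finset.sum_eq_zero; intro i _; simp [h i])

lemma UU_zero (α : ℝ) (m : ℕ) : UU α m 0 0 = 1 := by
  rw [UU, Wset_zero, Finset.sum_singleton, Pterm]
  simp

lemma UU_zero' (α : ℝ) (m s : ℕ) (hs : 1 ≤ s) : UU α m s 0 = 0 := by
  rw [UU]
  have : Wset m s 0 = ∅ := by
    refine Finset.eq_empty_of_forall_notMem fun w hw => ?_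
    obtain ⟨h1, h2⟩ := mem_Wset.mp hw
    have hz : ∀ i ∈ univ, w i = 0 := Finset.sum_eq_zero_iff.mp h2
    have : ∑ i : Fin m, (i.1 + 1) * w i = 0 :=
      Finset.sum_eq_zero fun i hi => by rw [hz i hi, Nat.mul_zero]
    omega
  rw [this, Finset.sum_empty]

lemma TT_zero (α : ℝ) : TT α 0 0 = 1 := by
  have : compositions 0 0 = {fun i => i.elim0} := by
    ext f
    simp only [mem_compositions, Finset.mem_singleton]
    constructor
    · intro _; funext i; exact i.elim0
    · intro _; exact ⟨fun i => i.elim0, by simp⟩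
  rw [TT, this, Finset.sum_singleton]
  simp

lemma TT_zero' (α : ℝ) (s : ℕ) (hs : 1 ≤ s) : TT α s 0 = 0 := by
  have : compositions s 0 = ∅ := by
    refine Finset.eq_empty_of_forall_notMem fun f hf => ?_
    obtain ⟨_, h2⟩ := mem_compositions.mp hf
    simp at h2
    omega
  rw [TT, this, Finset.sum_empty]

lemma factorial_UU (α : ℝ) (m : ℕ) :
    ∀ k s, s ≤ m → (Nat.factorial k : ℝ) * UU α m s k = TT α s k := by
  intro k
  induction k with
  | zero =>
    intro s _
    rcases Nat.eq_zero_or_pos s with hs | hs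
    · subst hs; rw [UU_zero, TT_zero]; simp
    · rw [UU_zero' α m s hs, TT_zero' α s hs]; simp
  | succ k ih =>
    intro s hs
    have h1 := UU_rec α s (k + 1) (by omega) hs
    push_cast at h1
    calc (Nat.factorial (k + 1) : ℝ) * UU α m s (k + 1)
        = (Nat.factorial k : ℝ) * (((k : ℝ) + 1) * UU α m s (k + 1)) := by
          push_cast [Nat.factorial_succ]; ring
      _ = (Nat.factorial k : ℝ) * ∑ a ∈ Finset.Icc 1 s,
            (risingFac (1 - α) (a - 1) / (Nat.factorial a : ℝ)) * UU α m (s - a) k := by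
          rw [h1]
      _ = ∑ a ∈ Finset.Icc 1 s,
            (risingFac (1 - α) (a - 1) / (Nat.factorial a : ℝ)) *
              ((Nat.factorial k : ℝ) * UU α m (s - a) k) := by
          rw [Finset.mul_sum]
          refine Finset.sum_congr rfl fun a _ => ?_
          ring
      _ = ∑ a ∈ Finset.Icc 1 s,
            (risingFac (1 - α) (a - 1) / (Nat.factorial a : ℝ)) * TT α (s - a) k := by
          refine Finset.sum_congr rfl fun a _ => ?_
          rw [ih (s - a) (le_trans (Nat.sub_le s a) hs)]
      _ = TT α s (k + 1) := (TT_rec α s k).symm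

lemma UU_eq (α : ℝ) (m s k : ℕ) (hs : s ≤ m) :
    UU α m s k = genStirling α s k / (Nat.factorial s : ℝ) := by
  have h := factorial_UU α m k s hs
  rw [genStirling_eq]
  have hk : (Nat.factorial k : ℝ) ≠ 0 := Nat.cast_ne_zero.mpr (Nat.factorial_ne_zero _)
  have hs' : (Nat.factorial s : ℝ) ≠ 0 := Nat.cast_ne_zero.mpr (Nat.factorial_ne_zero _)
  field_simp
  linear_combination h


lemma condSampling_eq_Pterm (α : ℝ) (V : ℕ → ℕ → ℝ) (n j m : ℕ) (w : Fin m → ℕ) :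
    condSampling α V n j m w =
      (Nat.factorial m : ℝ) * (V (n + m) (j + ∑ i, w i) / V n j) *
        (risingFac ((n : ℝ) - j * α) (m - ∑ i, (i.1 + 1) * w i) /
          (Nat.factorial (m - ∑ i, (i.1 + 1) * w i) : ℝ)) * Pterm α w := rfl

lemma Icc_zero_eq_range (n : ℕ) : Finset.Icc 0 n = Finset.range (n + 1) := by
  ext x; simp [Nat.lt_succ_iff]

lemma filter_one_le_range (m : ℕ) :
    (Finset.range (m + 1)).filter (fun k => 1 ≤ k) = Finset.Icc 1 m := by
  ext x; simp [Nat.lt_succ_iff]; omega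

lemma filter_l_le_range (m l : ℕ) :
    (Finset.range (m + 1)).filter (fun s => l ≤ s) = Finset.Icc l m := by
  ext x; simp [Nat.lt_succ_iff]; omega


/-- Expected number of new blocks of size `l` under the conditional Gibbs
sampling formula. -/
theorem condSampling_expected_size_l (n j m : ℕ)
    (hn : 1 ≤ n) (hj : 1 ≤ j) (hm : 1 ≤ m) (hjn : j ≤ n)
    (nv : Fin j → ℕ) (hnv : ∀ i, 0 < nv i) (hsum : ∑ i, nv i = n)
    (α : ℝ) (hα : α < 1) (V : ℕ → ℕ → ℝ) (hV : V n j ≠ 0)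
    (l : ℕ) (hl : 1 ≤ l) (hlm : l ≤ m) :
    ∑ w ∈ condCountVectors m,
        ((w ⟨l - 1, by omega⟩ : ℕ) : ℝ) * condSampling α V n j m w =
      (m.choose l : ℝ) * (risingFac (1 - α) (l - 1) / V n j) *
        ∑ k ∈ Finset.Icc 1 (m - l + 1),
          V (n + m) (j + k) *
            genStirlingNC α (-((n : ℝ) - j * α)) (m - l) (k - 1) := by
  have hlm' : l - 1 < m := by omega
  set a : Fin m := ⟨l - 1, hlm'⟩ with ha
  set R : ℝ := (n : ℝ) - j * α with hR
  set gL : ℝ := risingFac (1 - α) (l - 1) with hgL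
  set C : ℕ → ℕ → ℝ := fun s k => (Nat.factorial m : ℝ) * (V (n + m) (j + k) / V n j) *
    (risingFac R (m - s) / (Nat.factorial (m - s) : ℝ)) with hC
  -- the common value of each (s,k)-fiber
  set G : ℕ → ℕ → ℝ := fun s k => C s k *
    (gL / (Nat.factorial l : ℝ) * (genStirling α (s - l) (k - 1) / (Nat.factorial (s - l) : ℝ)))
    with hG
  have hav : a.1 + 1 = l := by simp [ha]; omega
  -- Step 1 : fiberwise decomposition
  have hmaps : ∀ w ∈ condCountVectors m,
      (∑ i, (i.1 + 1) * w i, ∑ i, w i) ∈ Finset.range (m + 1) ×ˢ Finset.range (m + 1) := by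
    intro w hw
    have hle : ∑ i, (i.1 + 1) * w i ≤ m := (Finset.mem_filter.mp hw).2
    have hle2 : ∑ i, w i ≤ ∑ i, (i.1 + 1) * w i :=
      Finset.sum_le_sum fun i _ => Nat.le_mul_of_pos_left _ (Nat.succ_pos _)
    rw [Finset.mem_product]
    constructor <;> (rw [Finset.mem_range]; omega)
  have hfib : ∀ p ∈ Finset.range (m + 1) ×ˢ Finset.range (m + 1),
      (condCountVectors m).filter
        (fun w => (∑ i, (i.1 + 1) * w i, ∑ i, w i) = p) = Wset m p.1 p.2 := by
    intro p hp
    have hp1 : p.1 ≤ m := by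
      have := (Finset.mem_product.mp hp).1
      rw [Finset.mem_range] at this; omega
    ext w
    simp only [Finset.mem_filter, mem_Wset, condCountVectors, Fintype.mem_piFinset,
      Finset.mem_range, Prod.ext_iff]
    constructor
    · rintro ⟨⟨_, _⟩, h1, h2⟩
      exact ⟨h1, h2⟩
    · rintro ⟨h1, h2⟩
      refine ⟨⟨fun i => ?_, by omega⟩, h1, h2⟩
      have hi1 : w i ≤ (i.1 + 1) * w i := Nat.le_mul_of_pos_left _ (Nat.succ_pos _)
      have hi2 : (i.1 + 1) * w i ≤ ∑ i, (i.1 + 1) * w i :=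
        Finset.single_le_sum (f := fun i : Fin m => (i.1 + 1) * w i)
          (fun i _ => Nat.zero_le _) (Finset.mem_univ i)
      omega
  rw [← Finset.sum_fiberwise_of_maps_to hmaps
    (fun w => ((w a : ℕ) : ℝ) * condSampling α V n j m w)]
  rw [Finset.sum_congr rfl fun p hp => by rw [hfib p hp]]
  rw [Finset.sum_product]
  -- Step 2 : evaluate each fiber
  have key : ∀ s ∈ Finset.range (m + 1), ∀ k ∈ Finset.range (m + 1),
      ∑ w ∈ Wset m s k, ((w a : ℕ) : ℝ) * condSampling α V n j m w =
        if l ≤ s then (if 1 ≤ k then G s k else 0) else 0 := by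
    intro s hs k hk
    have hsm : s ≤ m := by rw [Finset.mem_range] at hs; omega
    have step : ∀ w ∈ Wset m s k, ((w a : ℕ) : ℝ) * condSampling α V n j m w =
        C s k * (((w a : ℕ) : ℝ) * Pterm α w) := by
      intro w hw
      obtain ⟨h1, h2⟩ := mem_Wset.mp hw
      rw [condSampling_eq_Pterm, h1, h2, hC]
      ring
    rw [Finset.sum_congr rfl step, ← Finset.mul_sum, sum_mul_Pterm α s k a, hav]
    by_cases hc1 : l ≤ s
    · by_cases hc2 : 1 ≤ k
      · rw [if_pos ⟨hc2, hc1⟩, if_pos hc1, if_pos hc2, hG]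
        rw [UU_eq α m (s - l) (k - 1) (by omega)]
      · rw [if_neg (fun hc => hc2 hc.1), if_pos hc1, if_neg hc2, mul_zero]
    · rw [if_neg (fun hc => hc1 hc.2), if_neg hc1, mul_zero]
  rw [Finset.sum_congr rfl fun s hs => Finset.sum_congr rfl fun k hk => key s hs k hk]
  -- collapse the ifs
  have pull : ∀ s : ℕ,
      (∑ k ∈ Finset.range (m + 1), if l ≤ s then (if 1 ≤ k then G s k else 0) else 0)
        = (if l ≤ s then (∑ k ∈ Finset.Icc 1 m, G s k) else 0) := by
    intro s
    split_ifs with h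
    · rw [← Finset.sum_filter, filter_one_le_range]
    · exact Finset.sum_const_zero
  rw [Finset.sum_congr rfl fun s _ => pull s, ← Finset.sum_filter, filter_l_le_range]
  -- Step 3 : rewrite the RHS
  have hrhs : (m.choose l : ℝ) * (gL / V n j) *
      ∑ k ∈ Finset.Icc 1 (m - l + 1),
        V (n + m) (j + k) * genStirlingNC α (-R) (m - l) (k - 1) =
      ∑ s ∈ Finset.Icc l m, ∑ k ∈ Finset.Icc 1 m,
        (m.choose l : ℝ) * (gL / V n j) * (V (n + m) (j + k) *
          (((m - l).choose (s - l) : ℝ) * genStirling α (s - l) (k - 1) *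
            risingFac R (m - s))) := by
    have h1 : ∀ k ∈ Finset.Icc 1 m, genStirlingNC α (-R) (m - l) (k - 1) =
        ∑ t ∈ Finset.range (m - l + 1),
          ((m - l).choose t : ℝ) * genStirling α t (k - 1) * risingFac R (m - l - t) := by
      intro k _
      rw [genStirlingNC, ← Icc_zero_eq_range]
      rw [Finset.sum_subset (Finset.Icc_subset_Icc (Nat.zero_le _) le_rfl)]
      · exact Finset.sum_congr rfl fun t _ => by rw [neg_neg]
      · intro t ht hnt
        rw [Finset.mem_Icc] at ht hnt
        have : t < k - 1 := by omega
        rw [genStirling_eq_zero α this]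
        ring
    calc (m.choose l : ℝ) * (gL / V n j) *
        ∑ k ∈ Finset.Icc 1 (m - l + 1),
          V (n + m) (j + k) * genStirlingNC α (-R) (m - l) (k - 1)
        = ∑ k ∈ Finset.Icc 1 m, (m.choose l : ℝ) * (gL / V n j) *
            (V (n + m) (j + k) * genStirlingNC α (-R) (m - l) (k - 1)) := by
          rw [Finset.mul_sum]
          refine Finset.sum_subset (Finset.Icc_subset_Icc le_rfl (by omega)) ?_
          intro k hk hnk
          rw [Finset.mem_Icc] at hk hnk
          have hz : genStirlingNC α (-R) (m - l) (k - 1) = 0 := by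
            rw [genStirlingNC]
            refine Finset.sum_eq_zero fun t ht => ?_
            rw [Finset.mem_Icc] at ht
            rw [genStirling_eq_zero α (show t < k - 1 by omega)]
            ring
          rw [hz]
          ring
      _ = ∑ k ∈ Finset.Icc 1 m, ∑ s ∈ Finset.Icc l m, (m.choose l : ℝ) * (gL / V n j) *
            (V (n + m) (j + k) * (((m - l).choose (s - l) : ℝ) *
              genStirling α (s - l) (k - 1) * risingFac R (m - s))) := by
          refine Finset.sum_congr rfl fun k hk => ?_
          rw [h1 k hk, Finset.mul_sum, Finset.mul_sum]
          refine Finset.sum_nbij' (fun t => t + l) (fun s => s - l) ?_ ?_ ?_ ?_ ?_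
          · intro t ht
            rw [Finset.mem_range] at ht
            rw [Finset.mem_Icc]
            show l ≤ t + l ∧ t + l ≤ m
            omega
          · intro s hs
            rw [Finset.mem_Icc] at hs
            rw [Finset.mem_range]
            show s - l < m - l + 1
            omega
          · intro t _
            show t + l - l = t
            omega
          · intro s hs
            rw [Finset.mem_Icc] at hs
            show s - l + l = s
            omega
          · intro t ht
            rw [Finset.mem_range] at ht
            have e1 : t + l - l = t := by omega
            have e2 : m - (t + l) = m - l - t := by omega
            rw [e1, e2]
      _ = _ := Finset.sum_comm
  rw [hrhs]
  -- Step 4 : termwise identity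
  refine Finset.sum_congr rfl fun s hs => Finset.sum_congr rfl fun k hk => ?_
  rw [Finset.mem_Icc] at hs hk
  rw [hG, hC]
  have hfac1 : ((m.choose l : ℕ) : ℝ) * (Nat.factorial l : ℝ) * (Nat.factorial (m - l) : ℝ)
      = (Nat.factorial m : ℝ) := by
    exact_mod_cast congrArg (Nat.cast : ℕ → ℝ) (Nat.choose_mul_factorial_mul_factorial hlm)
  have hfac2 : (((m - l).choose (s - l) : ℕ) : ℝ) * (Nat.factorial (s - l) : ℝ) *
      (Nat.factorial (m - s) : ℝ) = (Nat.factorial (m - l) : ℝ) := by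
    have h2 : s - l ≤ m - l := by omega
    have h3 : m - l - (s - l) = m - s := by omega
    have := Nat.choose_mul_factorial_mul_factorial h2
    rw [h3] at this
    exact_mod_cast congrArg (Nat.cast : ℕ → ℝ) this
  have hne : ∀ q : ℕ, (Nat.factorial q : ℝ) ≠ 0 :=
    fun q => Nat.cast_ne_zero.mpr (Nat.factorial_ne_zero _)
  field_simp
  rw [← hfac1, ← hfac2]
  ring
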